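/- Let {E_i}_{i=1}^n be a POVM on ℂ^d with d ≤ n, n ≥ 2, and every effect E_i nonzero, and define its orthogonality O = Σ_{i,j=1}^n (tr(√E_i √E_j))² − 2d + n. Then O ≥ (n−d)²/(n−1). -/

import Mathlib

open Matrix BigOperators
open scoped ComplexOrder

/-- The positive semidefinite square root of a positive semidefinite matrix
(the definition `Matrix.PosSemidef.sqrt` of the older Mathlib, since removed). -/
noncomputable def Matrix.PosSemidef.sqrt {n : Type*} [Fintype n] [DecidableEq n] {𝕜 : Type*}
    [RCLike 𝕜] {A : Matrix n n 𝕜} (hA : A.PosSemidef) : Matrix n n 𝕜 :=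
  (hA.1.eigenvectorUnitary : Matrix n n 𝕜) * diagonal (((↑) : ℝ → 𝕜) ∘ (√·) ∘ hA.1.eigenvalues) *
    (star hA.1.eigenvectorUnitary : Matrix n n 𝕜)

lemma Matrix.PosSemidef.posSemidef_sqrt {n : Type*} [Fintype n] [DecidableEq n]
    {A : Matrix n n ℂ} (hA : A.PosSemidef) : hA.sqrt.PosSemidef := by
  have hD : (diagonal (((↑) : ℝ → ℂ) ∘ (√·) ∘ hA.1.eigenvalues)).PosSemidef :=
    Matrix.posSemidef_diagonal_iff.mpr fun i => by
      simpa using Complex.zero_le_real.mpr (Real.sqrt_nonneg (hA.1.eigenvalues i))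
  exact hD.mul_mul_conjTranspose_same (hA.1.eigenvectorUnitary : Matrix n n ℂ)

lemma Matrix.PosSemidef.sqrt_mul_self {n : Type*} [Fintype n] [DecidableEq n]
    {A : Matrix n n ℂ} (hA : A.PosSemidef) : hA.sqrt * hA.sqrt = A := by
  conv_rhs => rw [hA.1.spectral_theorem, Unitary.conjStarAlgAut_apply]
  unfold Matrix.PosSemidef.sqrt
  have hU : (star hA.1.eigenvectorUnitary : Matrix n n ℂ) * (hA.1.eigenvectorUnitary : Matrix n n ℂ)
      = 1 := Unitary.coe_star_mul_self _
  have key : ∀ U S D : Matrix n n ℂ, S * U = 1 → U * D * S * (U * D * S) = U * (D * D) * S := by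
    intro U S D h
    rw [show U * D * S * (U * D * S) = U * (D * (S * U) * D) * S by simp only [Matrix.mul_assoc],
      h, Matrix.mul_one]
  refine (key _ _ _ hU).trans ?_
  rw [diagonal_mul_diagonal]
  congr 1; congr 1; congr 1
  funext i
  simp [← Complex.ofReal_mul, Real.mul_self_sqrt (hA.eigenvalues_nonneg i)]

variable {m : Type*} [Fintype m] [DecidableEq m]

lemma psd_smul' {M : Matrix m m ℂ} (hM : M.PosSemidef) {r : ℝ}
    (hr : 0 ≤ r) : ((r : ℂ) • M).PosSemidef := by
  constructor
  · rw [Matrix.IsHermitian, Matrix.conjTranspose_smul, hM.1.eq]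
    congr 1
    simp [Complex.conj_ofReal]
  · exact (hM.smul (Complex.zero_le_real.mpr hr)).2

lemma psd_trace_nonneg {Q : Matrix m m ℂ} (hQ : Q.PosSemidef) : 0 ≤ Q.trace := by
  rw [Matrix.trace]
  refine Finset.sum_nonneg fun i _ => ?_
  simpa [Matrix.mulVec_single, dotProduct, Pi.single_apply] using
    hQ.dotProduct_mulVec_nonneg (Pi.single i 1)

lemma psd_trace_real {Q : Matrix m m ℂ} (hQ : Q.PosSemidef) : ((Q.trace.re : ℂ)) = Q.trace := by
  have h := psd_trace_nonneg hQ
  rw [Complex.le_def] at h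
  exact Complex.ext (by simp) (by simp [← h.2])

lemma trace_mul_psd_nonneg {P Q : Matrix m m ℂ}
    (hP : P.PosSemidef) (hQ : Q.PosSemidef) : 0 ≤ (P * Q).trace := by
  have h1 : (hP.sqrt * Q * hP.sqrt).trace = (P * Q).trace := by
    rw [Matrix.trace_mul_cycle, hP.sqrt_mul_self]
  rw [← h1]
  have h2 : (hP.sqrt * Q * hP.sqrt).PosSemidef := by
    have := hQ.mul_mul_conjTranspose_same hP.sqrt
    rwa [hP.posSemidef_sqrt.isHermitian.eq] at this
  exact psd_trace_nonneg h2

variable {m : Type*} [Fintype m] [DecidableEq m]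

lemma herm_trace_eq_sum_ev {Q : Matrix m m ℂ} (hQ : Q.IsHermitian) :
    Q.trace = ∑ i, (hQ.eigenvalues i : ℂ) := by
  conv_lhs => rw [hQ.spectral_theorem, Unitary.conjStarAlgAut_apply]
  rw [Matrix.trace_mul_cycle, Matrix.mem_unitaryGroup_iff'.mp hQ.eigenvectorUnitary.2,
    Matrix.one_mul, Matrix.trace_diagonal]
  rfl

lemma smul_one_sub_psd {Q : Matrix m m ℂ} (hQ : Q.PosSemidef) :
    (Q.trace • (1 : Matrix m m ℂ) - Q).PosSemidef := by
  have hH := hQ.isHermitian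
  set U : Matrix m m ℂ := (hH.eigenvectorUnitary : Matrix m m ℂ) with hUdef
  have hU : U * star U = 1 := Matrix.mem_unitaryGroup_iff.mp hH.eigenvectorUnitary.2
  have hdiag : Q.trace • (1 : Matrix m m ℂ) - Q
      = U * (Matrix.diagonal (fun i => Q.trace - (hH.eigenvalues i : ℂ))) * star U := by
    have h1 : Q.trace • (1 : Matrix m m ℂ) = U * (Q.trace • (1 : Matrix m m ℂ)) * star U := by
      rw [Matrix.mul_smul, Matrix.mul_one, Matrix.smul_mul, hU]
    conv_lhs => rw [h1, hH.spectral_theorem, Unitary.conjStarAlgAut_apply]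
    rw [← Matrix.sub_mul, ← Matrix.mul_sub]
    congr 2
    ext i j
    rcases eq_or_ne i j with rfl | h
    · simp only [Matrix.sub_apply, Matrix.smul_apply, Matrix.one_apply_eq,
        Matrix.diagonal_apply_eq, Function.comp_apply, smul_eq_mul, mul_one]
      rw [congrArg Matrix.trace hH.spectral_theorem]
      rfl
    · simp [Matrix.diagonal_apply_ne _ h, Matrix.one_apply_ne h]
  rw [hdiag]
  have hD : (Matrix.diagonal (fun i => Q.trace - (hH.eigenvalues i : ℂ))).PosSemidef := by
    refine Matrix.posSemidef_diagonal_iff.mpr fun i => ?_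
    rw [herm_trace_eq_sum_ev hH, ← Finset.sum_erase_add _ _ (Finset.mem_univ i)]
    simp only [add_sub_cancel_right]
    rw [← Complex.ofReal_sum]
    exact Complex.zero_le_real.mpr <| Finset.sum_nonneg fun j _ => hQ.eigenvalues_nonneg j
  have := hD.mul_mul_conjTranspose_same U
  rwa [← Matrix.star_eq_conjTranspose] at this

lemma psd_smul_sub_sq {Q : Matrix m m ℂ} (hQ : Q.PosSemidef) :
    (Q.trace • Q - Q * Q).PosSemidef := by
  have hR := hQ.posSemidef_sqrt
  set R := hQ.sqrt with hRdef
  have hRR : R * R = Q := hQ.sqrt_mul_self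
  have key : R * (Q.trace • (1 : Matrix m m ℂ) - Q) * R = Q.trace • Q - Q * Q := by
    rw [Matrix.mul_sub, Matrix.sub_mul, Matrix.mul_smul, Matrix.mul_one, Matrix.smul_mul, hRR]
    rw [sub_right_inj]
    rw [← hRR]
    simp only [Matrix.mul_assoc]
  have := (smul_one_sub_psd hQ).mul_mul_conjTranspose_same R
  rwa [hR.isHermitian.eq, key] at this

lemma psd_trace_pos {Q : Matrix m m ℂ} (hQ : Q.PosSemidef) (h0 : Q ≠ 0) : 0 < Q.trace.re := by
  set R := hQ.sqrt with hRdef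
  have hRR : R * R = Q := hQ.sqrt_mul_self
  have hR0 : R ≠ 0 := by
    intro h
    exact h0 (by rw [← hRR, h, Matrix.mul_zero])
  obtain ⟨i0, j0, hij⟩ : ∃ i j, R i j ≠ 0 := by
    by_contra h
    push_neg at h
    exact hR0 (Matrix.ext fun i j => by simpa using h i j)
  have hH : Rᴴ = R := hQ.posSemidef_sqrt.isHermitian.eq
  have herm : ∀ i j, R i j = star (R j i) := fun i j => by
    conv_rhs => rw [← hH]
    simp [Matrix.conjTranspose_apply]
  have hdiag : ∀ i, ((R * R) i i).re = ∑ j, Complex.normSq (R j i) := by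
    intro i
    rw [Matrix.mul_apply, Complex.re_sum]
    refine Finset.sum_congr rfl fun j _ => ?_
    rw [herm i j]
    simp [Complex.mul_re, Complex.normSq_apply]
  have htr : Q.trace.re = ∑ i, ∑ j, Complex.normSq (R j i) := by
    rw [← hRR, Matrix.trace, Complex.re_sum]
    exact Finset.sum_congr rfl fun i _ => hdiag i
  rw [htr]
  refine Finset.sum_pos' (fun i _ => Finset.sum_nonneg fun j _ => Complex.normSq_nonneg _)
    ⟨j0, Finset.mem_univ _,
      Finset.sum_pos' (fun j _ => Complex.normSq_nonneg _)
        ⟨i0, Finset.mem_univ _, Complex.normSq_pos.mpr hij⟩⟩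

lemma scalar_main (n : ℕ) (hn : 2 ≤ n) (dR : ℝ) (hdn : dR ≤ n)
    (x : Fin n → ℝ) (a : Fin n → Fin n → ℝ)
    (hs : 0 < ∑ i, (x i) ^ 2)
    (hdiag : ∑ i, a i i = dR)
    (hu : ∑ i, (x i) ^ 2 ≤ ∑ i, ∑ j, a i j * (x i * x j)) :
    ((n : ℝ) - dR) ^ 2 / ((n : ℝ) - 1) ≤ (∑ i, ∑ j, (a i j) ^ 2) - 2 * dR + n := by
  set s : ℝ := ∑ i, (x i) ^ 2 with hsdef
  set u : ℝ := ∑ i, ∑ j, a i j * (x i * x j) with hudef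
  set S : ℝ := ∑ i, ∑ j, (a i j) ^ 2 with hSdef
  set r : ℝ := u / s with hrdef
  have hsr : u = s * r := by rw [hrdef, mul_div_assoc']; exact (mul_div_cancel_left₀ u hs.ne').symm
  have hr : 1 ≤ r := (one_le_div hs).mpr hu
  -- primitive sums
  have hP1 : ∑ i, ∑ j, a i j * (if i = j then (1:ℝ) else 0) = dR := by
    rw [← hdiag]
    refine Finset.sum_congr rfl fun i _ => ?_
    simp
  have hP3 : ∑ i, ∑ j, (x i * x j) * (if i = j then (1:ℝ) else 0) = s := by
    rw [hsdef]
    refine Finset.sum_congr rfl fun i _ => ?_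
    simp [pow_two]
  have hP4 : ∑ i, ∑ j, (x i * x j) * (x i * x j) = s ^ 2 := by
    have h : ∀ i j : Fin n, (x i * x j) * (x i * x j) = (x i)^2 * (x j)^2 := fun i j => by ring
    simp_rw [h]
    rw [← Finset.sum_mul_sum, ← hsdef, pow_two]
  have hP5 : ∑ i : Fin n, ∑ j : Fin n, (if i = j then (1:ℝ) else 0) * (if i = j then (1:ℝ) else 0)
      = n := by
    have h : ∀ i : Fin n, ∑ j, (if i = j then (1:ℝ) else 0) * (if i = j then (1:ℝ) else 0)
        = 1 := by intro i; simp
    simp_rw [h]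
    simp
  -- Cauchy-Schwarz
  have hCS := Finset.sum_mul_sq_le_sq_mul_sq Finset.univ
    (fun p : Fin n × Fin n => s * a p.1 p.2 - r * (x p.1 * x p.2))
    (fun p : Fin n × Fin n => s * (if p.1 = p.2 then (1:ℝ) else 0) - x p.1 * x p.2)
  simp only [Fintype.sum_prod_type] at hCS
  have hfg : ∑ i : Fin n, ∑ j : Fin n,
      (s * a i j - r * (x i * x j)) * (s * (if i = j then (1:ℝ) else 0) - x i * x j)
      = s^2 * (dR - r) := by
    have h : ∀ i j : Fin n,
        (s * a i j - r * (x i * x j)) * (s * (if i = j then (1:ℝ) else 0) - x i * x j)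
        = s^2 * (a i j * (if i = j then (1:ℝ) else 0))
          - s * (a i j * (x i * x j))
          - (r * s) * ((x i * x j) * (if i = j then (1:ℝ) else 0))
          + r * ((x i * x j) * (x i * x j)) := fun i j => by ring
    simp_rw [h, Finset.sum_add_distrib, Finset.sum_sub_distrib, ← Finset.mul_sum]
    rw [hP1, hP3, hP4, ← hudef, hsr]
    ring
  have hff : ∑ i : Fin n, ∑ j : Fin n, (s * a i j - r * (x i * x j))^2
      = s^2 * (S - r^2) := by
    have h : ∀ i j : Fin n, (s * a i j - r * (x i * x j))^2
        = s^2 * (a i j)^2 - (2*s*r) * (a i j * (x i * x j))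
          + r^2 * ((x i * x j) * (x i * x j)) := fun i j => by ring
    simp_rw [h, Finset.sum_add_distrib, Finset.sum_sub_distrib, ← Finset.mul_sum]
    rw [hP4, ← hSdef, ← hudef, hsr]
    ring
  have hgg : ∑ i : Fin n, ∑ j : Fin n,
      (s * (if i = j then (1:ℝ) else 0) - x i * x j)^2 = s^2 * ((n:ℝ) - 1) := by
    have h : ∀ i j : Fin n, (s * (if i = j then (1:ℝ) else 0) - x i * x j)^2
        = s^2 * ((if i = j then (1:ℝ) else 0) * (if i = j then (1:ℝ) else 0))
          - (2*s) * ((x i * x j) * (if i = j then (1:ℝ) else 0))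
          + (x i * x j) * (x i * x j) := fun i j => by ring
    simp_rw [h, Finset.sum_add_distrib, Finset.sum_sub_distrib, ← Finset.mul_sum]
    rw [hP5, hP3, hP4]
    ring
  rw [hfg, hff, hgg] at hCS
  have hkey : (dR - r)^2 ≤ (S - r^2) * ((n:ℝ) - 1) := by
    have e1 : (s^2 * (dR - r))^2 = s^4 * (dR - r)^2 := by ring
    have e2 : s^2 * (S - r^2) * (s^2 * ((n:ℝ) - 1)) = s^4 * ((S - r^2) * ((n:ℝ) - 1)) := by ring
    rw [e1, e2] at hCS
    exact le_of_mul_le_mul_left hCS (by positivity)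
  have hn1 : (0:ℝ) < (n:ℝ) - 1 := by
    have : (2:ℝ) ≤ (n:ℝ) := by exact_mod_cast hn
    linarith
  have hn0 : (0:ℝ) ≤ (n:ℝ) := by positivity
  have haux : 0 ≤ (r - 1) * ((n:ℝ)*(r+1) - 2*dR) := by
    apply mul_nonneg (by linarith)
    nlinarith [mul_nonneg hn0 (by linarith : (0:ℝ) ≤ r - 1)]
  rw [div_le_iff₀ hn1]
  nlinarith [hkey, haux]

/-- For a POVM `{E_i}` on `ℂ^d` with `d ≤ n`, `n ≥ 2`, and all effects nonzero,
the orthogonality `O = Σ_{i,j} (tr(√E_i √E_j))² − 2d + n` satisfies `O ≥ (n−d)²/(n−1)`. -/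
theorem orthogonality_lower_bound
    (d n : ℕ) (hdn : d ≤ n) (hn : 2 ≤ n)
    (E : Fin n → Matrix (Fin d) (Fin d) ℂ)
    (hE : ∀ i, (E i).PosSemidef)
    (hsum : ∑ i, E i = 1)
    (hne : ∀ i, E i ≠ 0) :
    ((n : ℝ) - d) ^ 2 / ((n : ℝ) - 1)
      ≤ ∑ i, ∑ j, (((hE i).sqrt * (hE j).sqrt).trace.re) ^ 2 - 2 * (d : ℝ) + (n : ℝ) := by
  classical
  have hK : ∀ i, ((hE i).sqrt).PosSemidef := fun i => (hE i).posSemidef_sqrt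
  have hKK : ∀ i, (hE i).sqrt * (hE i).sqrt = E i := fun i => (hE i).sqrt_mul_self
  set x : Fin n → ℝ := fun i => ((hE i).sqrt.trace).re with hxdef
  set a : Fin n → Fin n → ℝ := fun i j => (((hE i).sqrt * (hE j).sqrt).trace).re with hadef
  -- nonzero sqrt
  have hK0 : ∀ i, (hE i).sqrt ≠ 0 := by
    intro i h
    exact hne i (by rw [← hKK i, h, Matrix.mul_zero])
  -- positivity of s
  have hs : 0 < ∑ i, (x i) ^ 2 := by
    refine Finset.sum_pos' (fun i _ => sq_nonneg _) ⟨⟨0, by omega⟩, Finset.mem_univ _, ?_⟩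
    have := psd_trace_pos (hK ⟨0, by omega⟩) (hK0 ⟨0, by omega⟩)
    positivity
  -- diagonal sum
  have hdiag : ∑ i, a i i = (d : ℝ) := by
    have h1 : ∀ i, a i i = ((E i).trace).re := fun i => by
      rw [hadef]; simp only []; rw [hKK i]
    simp_rw [h1]
    rw [← Complex.re_sum, ← Matrix.trace_sum, hsum, Matrix.trace_one]
    simp
  -- key inequality : s ≤ u
  have hu : ∑ i, (x i) ^ 2 ≤ ∑ i, ∑ j, a i j * (x i * x j) := by
    set C : Matrix (Fin d) (Fin d) ℂ := ∑ i, ((x i : ℂ) • (hE i).sqrt) with hCdef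
    have hC0 : C.PosSemidef := by
      rw [hCdef]
      refine Finset.sum_induction _ _ (fun A B hA hB => hA.add hB) Matrix.PosSemidef.zero
        (fun i _ => psd_smul' (hK i) ?_)
      exact (Complex.le_def.mp (psd_trace_nonneg (hK i))).1.trans_eq' (by simp)
    have hC1 : (C - 1).PosSemidef := by
      rw [hCdef, ← hsum, ← Finset.sum_sub_distrib]
      refine Finset.sum_induction _ _ (fun A B hA hB => hA.add hB) Matrix.PosSemidef.zero
        (fun i _ => ?_)
      have h2 := psd_smul_sub_sq (hK i)
      rw [← psd_trace_real (hK i), hKK i] at h2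
      exact h2
    have h3 : 0 ≤ (C * (C - 1)).trace := trace_mul_psd_nonneg hC0 hC1
    rw [Matrix.mul_sub, Matrix.mul_one, Matrix.trace_sub] at h3
    have h4 : 0 ≤ ((C * C).trace - C.trace).re := (Complex.le_def.mp h3).1.trans_eq' (by simp)
    rw [Complex.sub_re] at h4
    have htrC : (C.trace).re = ∑ i, (x i) ^ 2 := by
      rw [hCdef, Matrix.trace_sum, Complex.re_sum]
      refine Finset.sum_congr rfl fun i _ => ?_
      rw [Matrix.trace_smul, smul_eq_mul, Complex.re_ofReal_mul, pow_two]
    have htrCC : ((C * C).trace).re = ∑ i, ∑ j, a i j * (x i * x j) := by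
      rw [hCdef, Finset.sum_mul_sum, Matrix.trace_sum, Complex.re_sum]
      refine Finset.sum_congr rfl fun i _ => ?_
      rw [Matrix.trace_sum, Complex.re_sum]
      refine Finset.sum_congr rfl fun j _ => ?_
      rw [Matrix.smul_mul, Matrix.mul_smul, Matrix.trace_smul, Matrix.trace_smul,
        smul_eq_mul, smul_eq_mul, ← mul_assoc, ← Complex.ofReal_mul, Complex.re_ofReal_mul]
      ring
    rw [htrC, htrCC] at h4
    linarith
  have := scalar_main n hn (d : ℝ) (by exact_mod_cast hdn) x a hs hdiag hu
  exact this
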